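/- Local parameterization of the reverse 4-shock polar by shock speed: let γ>1, let U_a=(u_a,v_a,p_a,ρ_a) and U₂=(u₂,0,p₂,ρ₂) be states with ρ_a,ρ₂>0, p_a,p₂>0, u₂>c₂ where c₂=√(γp₂/ρ₂), and let σ₄₀ satisfy 0 < σ₄₀ < λ₄(U₂) (λ₄(U₂) = c₂/√(u₂²−c₂²)) and the Rankine–Hugoniot conditions σ₄₀·(W(U_a)−W(U₂)) = H(U_a)−H(U₂). Then there exist open neighborhoods N₁ of σ₄₀ in ℝ, N₂ of U_a in ℝ⁴, N₃ of U₂ in ℝ⁴, and a continuously differentiable map G₄ : N₁×N₂ → N₃ with G₄(σ₄₀,U_a)=U₂ such that for all (σ,U₀) ∈ N₁×N₂ and all U ∈ N₃: σ·(W(U₀)−W(U)) = H(U₀)−H(U) if and only if U = G₄(σ,U₀). -/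

import Mathlib

noncomputable section

/-- The flux map `W` of the 2-D steady full Euler system,
with state `U = (u, v, p, ρ)`. -/
def Wf (γ : ℝ) (U : Fin 4 → ℝ) : Fin 4 → ℝ :=
  ![U 3 * U 0,
    U 3 * U 0 ^ 2 + U 2,
    U 3 * U 0 * U 1,
    U 3 * U 0 * (γ * U 2 / ((γ - 1) * U 3) + (U 0 ^ 2 + U 1 ^ 2) / 2)]

/-- The flux map `H` of the 2-D steady full Euler system. -/
def Hf (γ : ℝ) (U : Fin 4 → ℝ) : Fin 4 → ℝ :=
  ![U 3 * U 1,
    U 3 * U 0 * U 1,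
    U 3 * U 1 ^ 2 + U 2,
    U 3 * U 1 * (γ * U 2 / ((γ - 1) * U 3) + (U 0 ^ 2 + U 1 ^ 2) / 2)]

/-- The combined map whose local inversion gives the implicit function. -/
def PhiMap (γ : ℝ) (x : ℝ × (Fin 4 → ℝ) × (Fin 4 → ℝ)) : ℝ × (Fin 4 → ℝ) × (Fin 4 → ℝ) :=
  (x.1, x.2.1, x.1 • (Wf γ x.2.1 - Wf γ x.2.2) - (Hf γ x.2.1 - Hf γ x.2.2))

/-- Directional derivative of `U ↦ Hf γ U - σ • Wf γ U` at `U` in direction `b`. -/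
def DVec (γ σ : ℝ) (U b : Fin 4 → ℝ) : Fin 4 → ℝ :=
  ![ (b 3 * U 1 + U 3 * b 1) - σ * (b 3 * U 0 + U 3 * b 0),
     (b 3 * U 0 * U 1 + U 3 * b 0 * U 1 + U 3 * U 0 * b 1)
       - σ * (b 3 * U 0 ^ 2 + 2 * U 3 * U 0 * b 0 + b 2),
     (b 3 * U 1 ^ 2 + 2 * U 3 * U 1 * b 1 + b 2)
       - σ * (b 3 * U 0 * U 1 + U 3 * b 0 * U 1 + U 3 * U 0 * b 1),
     ((b 3 * U 1 + U 3 * b 1) * (γ * U 2 / ((γ - 1) * U 3) + (U 0 ^ 2 + U 1 ^ 2) / 2)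
        + U 3 * U 1 * (γ * (b 2 * U 3 - U 2 * b 3) / ((γ - 1) * U 3 ^ 2) + (U 0 * b 0 + U 1 * b 1)))
       - σ * ((b 3 * U 0 + U 3 * b 0) * (γ * U 2 / ((γ - 1) * U 3) + (U 0 ^ 2 + U 1 ^ 2) / 2)
        + U 3 * U 0 * (γ * (b 2 * U 3 - U 2 * b 3) / ((γ - 1) * U 3 ^ 2) + (U 0 * b 0 + U 1 * b 1))) ]

lemma contDiffAt_Wf (γ : ℝ) (U : Fin 4 → ℝ) (hγ : γ - 1 ≠ 0) (hρ : U 3 ≠ 0) :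
    ContDiffAt ℝ 1 (Wf γ) U := by
  have hp : ∀ j : Fin 4, ContDiffAt ℝ 1 (fun V : Fin 4 → ℝ => V j) U :=
    fun j => (contDiff_apply ℝ ℝ j).contDiffAt
  have hden : ContDiffAt ℝ 1 (fun V : Fin 4 → ℝ => (γ - 1) * V 3) U :=
    (hp 3).const_smul (γ - 1) |>.congr_of_eventuallyEq (by filter_upwards with V; simp [smul_eq_mul])
  have hden' : (γ - 1) * U 3 ≠ 0 := mul_ne_zero hγ hρ
  have hE : ContDiffAt ℝ 1
      (fun V : Fin 4 → ℝ => γ * V 2 / ((γ - 1) * V 3) + (V 0 ^ 2 + V 1 ^ 2) / 2) U := by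
    exact (((hp 2).const_smul γ |>.congr_of_eventuallyEq
        (by filter_upwards with V; simp [smul_eq_mul])).div hden hden').add
      ((((hp 0).pow 2).add ((hp 1).pow 2)).div_const 2)
  rw [contDiffAt_pi]
  intro i
  fin_cases i <;> simp only [Wf, Matrix.cons_val_zero, Matrix.cons_val_one, Matrix.head_cons,
    Matrix.cons_val_two, Matrix.tail_cons, Matrix.cons_val_three]
  · exact (hp 3).mul (hp 0)
  · exact (((hp 3).mul ((hp 0).pow 2))).add (hp 2)
  · exact ((hp 3).mul (hp 0)).mul (hp 1)
  · exact ((hp 3).mul (hp 0)).mul hE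

lemma contDiffAt_Hf (γ : ℝ) (U : Fin 4 → ℝ) (hγ : γ - 1 ≠ 0) (hρ : U 3 ≠ 0) :
    ContDiffAt ℝ 1 (Hf γ) U := by
  have hp : ∀ j : Fin 4, ContDiffAt ℝ 1 (fun V : Fin 4 → ℝ => V j) U :=
    fun j => (contDiff_apply ℝ ℝ j).contDiffAt
  have hden : ContDiffAt ℝ 1 (fun V : Fin 4 → ℝ => (γ - 1) * V 3) U :=
    (hp 3).const_smul (γ - 1) |>.congr_of_eventuallyEq (by filter_upwards with V; simp [smul_eq_mul])
  have hden' : (γ - 1) * U 3 ≠ 0 := mul_ne_zero hγ hρ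
  have hE : ContDiffAt ℝ 1
      (fun V : Fin 4 → ℝ => γ * V 2 / ((γ - 1) * V 3) + (V 0 ^ 2 + V 1 ^ 2) / 2) U := by
    exact (((hp 2).const_smul γ |>.congr_of_eventuallyEq
        (by filter_upwards with V; simp [smul_eq_mul])).div hden hden').add
      ((((hp 0).pow 2).add ((hp 1).pow 2)).div_const 2)
  rw [contDiffAt_pi]
  intro i
  fin_cases i <;> simp only [Hf, Matrix.cons_val_zero, Matrix.cons_val_one, Matrix.head_cons,
    Matrix.cons_val_two, Matrix.tail_cons, Matrix.cons_val_three]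
  · exact (hp 3).mul (hp 1)
  · exact ((hp 3).mul (hp 0)).mul (hp 1)
  · exact (((hp 3).mul ((hp 1).pow 2))).add (hp 2)
  · exact ((hp 3).mul (hp 1)).mul hE

lemma contDiffAt_PhiMap (γ : ℝ) (x : ℝ × (Fin 4 → ℝ) × (Fin 4 → ℝ)) (hγ : γ - 1 ≠ 0)
    (h1 : x.2.1 3 ≠ 0) (h2 : x.2.2 3 ≠ 0) : ContDiffAt ℝ 1 (PhiMap γ) x := by
  have hc1 : ContDiffAt ℝ 1 (fun y : ℝ × (Fin 4 → ℝ) × (Fin 4 → ℝ) => y.2.1) x :=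
    (contDiff_fst.comp contDiff_snd).contDiffAt
  have hc2 : ContDiffAt ℝ 1 (fun y : ℝ × (Fin 4 → ℝ) × (Fin 4 → ℝ) => y.2.2) x :=
    (contDiff_snd.comp contDiff_snd).contDiffAt
  have hW1 := (contDiffAt_Wf γ x.2.1 hγ h1).comp x hc1
  have hW2 := (contDiffAt_Wf γ x.2.2 hγ h2).comp x hc2
  have hH1 := (contDiffAt_Hf γ x.2.1 hγ h1).comp x hc1
  have hH2 := (contDiffAt_Hf γ x.2.2 hγ h2).comp x hc2
  exact contDiffAt_fst.prodMk (hc1.prodMk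
    (((contDiffAt_fst.smul (hW1.sub hW2))).sub (hH1.sub hH2)))

lemma shockCurve_hasDerivAt (γ σ : ℝ) (A U b : Fin 4 → ℝ) (hγ : γ - 1 ≠ 0) (hρ : U 3 ≠ 0)
    (i : Fin 4) :
    HasDerivAt (fun t : ℝ =>
        σ * (Wf γ A i - Wf γ (U + t • b) i) - (Hf γ A i - Hf γ (U + t • b) i))
      (DVec γ σ U b i) 0 := by
  have hval : ∀ j : Fin 4, ∀ t : ℝ, (U + t • b) j = U j + t * b j := by
    intro j t; simp [Pi.add_apply, Pi.smul_apply, smul_eq_mul]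
  have hj : ∀ j : Fin 4, HasDerivAt (fun t : ℝ => U j + t * b j) (b j) 0 := by
    intro j
    simpa using (hasDerivAt_mul_const (b j)).const_add (U j)
  have hden : ((γ - 1) * (U 3 + 0 * b 3)) ≠ 0 := by
    simpa using mul_ne_zero hγ hρ
  have hE : HasDerivAt (fun t : ℝ =>
        γ * (U 2 + t * b 2) / ((γ - 1) * (U 3 + t * b 3))
          + ((U 0 + t * b 0) ^ 2 + (U 1 + t * b 1) ^ 2) / 2)
      (γ * (b 2 * U 3 - U 2 * b 3) / ((γ - 1) * U 3 ^ 2) + (U 0 * b 0 + U 1 * b 1)) 0 := by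
    have h1 : HasDerivAt (fun t : ℝ => γ * (U 2 + t * b 2)) (γ * b 2) 0 := (hj 2).const_mul γ
    have h2 : HasDerivAt (fun t : ℝ => (γ - 1) * (U 3 + t * b 3)) ((γ - 1) * b 3) 0 :=
      (hj 3).const_mul (γ - 1)
    have hdiv := h1.div h2 hden
    have hsq := (((hj 0).pow 2).add ((hj 1).pow 2)).div_const 2
    have := hdiv.add hsq
    refine this.congr_deriv ?_
    simp only [zero_mul, add_zero]
    field_simp
    ring
  fin_cases i <;>
    simp only [Wf, Hf, DVec, Matrix.cons_val_zero, Matrix.cons_val_one, Matrix.head_cons,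
      Matrix.cons_val_two, Matrix.tail_cons, Matrix.cons_val_three] <;>
    simp only [hval]
  · have h := ((hj 3).mul (hj 0)).const_sub (A 3 * A 0) |>.const_mul σ
      |>.sub (((hj 3).mul (hj 1)).const_sub (A 3 * A 1))
    refine h.congr_deriv ?_
    simp; ring
  · have h := (((hj 3).mul ((hj 0).pow 2)).add (hj 2)).const_sub (A 3 * A 0 ^ 2 + A 2)
      |>.const_mul σ |>.sub ((((hj 3).mul (hj 0)).mul (hj 1)).const_sub (A 3 * A 0 * A 1))
    refine h.congr_deriv ?_
    simp; ring
  · have h := (((hj 3).mul (hj 0)).mul (hj 1)).const_sub (A 3 * A 0 * A 1)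
      |>.const_mul σ |>.sub ((((hj 3).mul ((hj 1).pow 2)).add (hj 2)).const_sub
        (A 3 * A 1 ^ 2 + A 2))
    refine h.congr_deriv ?_
    simp; ring
  · have hWe := (((hj 3).mul (hj 0)).mul hE).const_sub
      (A 3 * A 0 * (γ * A 2 / ((γ - 1) * A 3) + (A 0 ^ 2 + A 1 ^ 2) / 2)) |>.const_mul σ
    have hHe := (((hj 3).mul (hj 1)).mul hE).const_sub
      (A 3 * A 1 * (γ * A 2 / ((γ - 1) * A 3) + (A 0 ^ 2 + A 1 ^ 2) / 2))
    have h := hWe.sub hHe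
    refine h.congr_deriv ?_
    simp; ring

lemma shock_inj (γ u₂ p₂ ρ₂ σ : ℝ) (b : Fin 4 → ℝ) (hγ : 1 < γ)
    (hρ2 : 0 < ρ₂) (hp2 : 0 < p₂) (hu : 0 < u₂) (hσ : 0 < σ)
    (hgap : σ ^ 2 * (u₂ ^ 2 * ρ₂ - γ * p₂) < γ * p₂)
    (h : DVec γ σ ![u₂, 0, p₂, ρ₂] b = 0) : b = 0 := by
  have hγ1 : γ - 1 ≠ 0 := ne_of_gt (by linarith)
  have hρ : ρ₂ ≠ 0 := ne_of_gt hρ2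
  have hu0 : u₂ ≠ 0 := ne_of_gt hu
  have hσ0 : σ ≠ 0 := ne_of_gt hσ
  have e0 := congrFun h 0
  have e1 := congrFun h 1
  have e2 := congrFun h 2
  have e3 := congrFun h 3
  simp only [DVec, Matrix.cons_val_zero, Matrix.cons_val_one, Matrix.head_cons,
    Matrix.cons_val_two, Matrix.tail_cons, Matrix.cons_val_three, Pi.zero_apply] at e0 e1 e2 e3
  -- step C : b 2 = -(ρ₂ * u₂ * b 0)
  have hC' : σ * (b 2 + ρ₂ * u₂ * b 0) = 0 := by linear_combination u₂ * e0 - e1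
  have hC : b 2 + ρ₂ * u₂ * b 0 = 0 := (mul_eq_zero.mp hC').resolve_left hσ0
  -- step En' = 0
  have hEn' : σ * (ρ₂ * u₂ *
      (γ * (b 2 * ρ₂ - p₂ * b 3) / ((γ - 1) * ρ₂ ^ 2) + (u₂ * b 0 + 0 * b 1))) = 0 := by
    linear_combination (γ * p₂ / ((γ - 1) * ρ₂) + (u₂ ^ 2 + 0 ^ 2) / 2) * e0 - e3
  have hEn2 : γ * (b 2 * ρ₂ - p₂ * b 3) / ((γ - 1) * ρ₂ ^ 2) + (u₂ * b 0 + 0 * b 1) = 0 := by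
    have := (mul_eq_zero.mp hEn').resolve_left hσ0
    have := (mul_eq_zero.mp this).resolve_left (mul_ne_zero hρ hu0)
    exact this
  -- cleared form of hEn2
  have hkey : γ * (b 2 * ρ₂ - p₂ * b 3) + (γ - 1) * ρ₂ ^ 2 * (u₂ * b 0) = 0 := by
    have hrw : γ * (b 2 * ρ₂ - p₂ * b 3) + (γ - 1) * ρ₂ ^ 2 * (u₂ * b 0)
        = ((γ - 1) * ρ₂ ^ 2) *
          (γ * (b 2 * ρ₂ - p₂ * b 3) / ((γ - 1) * ρ₂ ^ 2) + (u₂ * b 0 + 0 * b 1)) := by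
      field_simp
      ring
    rw [hrw, hEn2, mul_zero]
  -- step E : ρ₂ ^ 2 * u₂ * b 0 + γ * p₂ * b 3 = 0
  have hE : ρ₂ ^ 2 * u₂ * b 0 + γ * p₂ * b 3 = 0 := by
    linear_combination γ * ρ₂ * hC - hkey
  -- step D : b 0 + σ * b 1 = 0
  have hD' : ρ₂ * u₂ * (b 0 + σ * b 1) = 0 := by linear_combination hC - e2
  have hD : b 0 + σ * b 1 = 0 := (mul_eq_zero.mp hD').resolve_left (mul_ne_zero hρ hu0)
  -- step A : ρ₂ * b 0 * (1 + σ ^ 2) + σ ^ 2 * u₂ * b 3 = 0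
  have hA : ρ₂ * b 0 * (1 + σ ^ 2) + σ ^ 2 * u₂ * b 3 = 0 := by
    linear_combination ρ₂ * hD - σ * e0
  -- conclude b 3 = 0
  have hK : 0 < γ * p₂ * (1 + σ ^ 2) - σ ^ 2 * u₂ ^ 2 * ρ₂ := by nlinarith
  have hb3' : b 3 * (γ * p₂ * (1 + σ ^ 2) - σ ^ 2 * u₂ ^ 2 * ρ₂) = 0 := by
    linear_combination (1 + σ ^ 2) * hE - ρ₂ * u₂ * hA
  have hb3 : b 3 = 0 := (mul_eq_zero.mp hb3').resolve_right (ne_of_gt hK)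
  have hb0 : b 0 = 0 := by
    have : ρ₂ ^ 2 * u₂ * b 0 = 0 := by linear_combination hE - p₂ * γ * hb3
    have := (mul_eq_zero.mp this).resolve_left (mul_ne_zero (pow_ne_zero 2 hρ) hu0)
    exact this
  have hb1 : b 1 = 0 := by
    have : σ * b 1 = 0 := by linear_combination hD - hb0
    exact (mul_eq_zero.mp this).resolve_left hσ0
  have hb2 : b 2 = 0 := by linear_combination hC - ρ₂ * u₂ * hb0
  funext i
  fin_cases i
  · simpa using hb0
  · simpa using hb1
  · simpa using hb2
  · simpa using hb3

/-- Local parameterization of the reverse 4-shock polar by shock speed: near a strong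
4-shock `(σ₄₀, U_a, U₂)`, the Rankine–Hugoniot conditions are locally uniquely solvable
for the below state `U` as a `C¹` function `G₄(σ, U₀)` of the speed and the above state. -/
theorem shock4_reverse_polar_parameterization
    (γ u_a v_a p_a ρ_a u₂ p₂ ρ₂ σ₄₀ : ℝ) (hγ : 1 < γ)
    (hρa : 0 < ρ_a) (hρ2 : 0 < ρ₂) (hpa : 0 < p_a) (hp2 : 0 < p₂)
    (c₂ : ℝ) (hc₂ : c₂ = Real.sqrt (γ * p₂ / ρ₂)) (hsup : c₂ < u₂)
    (Ua U₂ : Fin 4 → ℝ) (hUa : Ua = ![u_a, v_a, p_a, ρ_a]) (hU₂ : U₂ = ![u₂, 0, p₂, ρ₂])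
    (hσ1 : 0 < σ₄₀) (hσ2 : σ₄₀ < c₂ / Real.sqrt (u₂ ^ 2 - c₂ ^ 2))
    (hRH : σ₄₀ • (Wf γ Ua - Wf γ U₂) = Hf γ Ua - Hf γ U₂) :
    ∃ (N₁ : Set ℝ) (N₂ N₃ : Set (Fin 4 → ℝ)),
      IsOpen N₁ ∧ IsOpen N₂ ∧ IsOpen N₃ ∧
      σ₄₀ ∈ N₁ ∧ Ua ∈ N₂ ∧ U₂ ∈ N₃ ∧
      ∃ G₄ : ℝ → (Fin 4 → ℝ) → (Fin 4 → ℝ),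
        ContDiffOn ℝ 1 (fun q : ℝ × (Fin 4 → ℝ) => G₄ q.1 q.2) (N₁ ×ˢ N₂) ∧
        G₄ σ₄₀ Ua = U₂ ∧
        (∀ σ ∈ N₁, ∀ U₀ ∈ N₂, G₄ σ U₀ ∈ N₃) ∧
        (∀ σ ∈ N₁, ∀ U₀ ∈ N₂, ∀ U ∈ N₃,
          (σ • (Wf γ U₀ - Wf γ U) = Hf γ U₀ - Hf γ U ↔ U = G₄ σ U₀)) := by
  classical
  have hγ1 : γ - 1 ≠ 0 := ne_of_gt (by linarith)
  have hρ : ρ₂ ≠ 0 := ne_of_gt hρ2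
  have hUa3 : Ua 3 = ρ_a := by rw [hUa]; rfl
  have hU23 : U₂ 3 = ρ₂ := by rw [hU₂]; rfl
  set pt : ℝ × (Fin 4 → ℝ) × (Fin 4 → ℝ) := (σ₄₀, Ua, U₂) with hptdef
  have hΦ : ContDiffAt ℝ 1 (PhiMap γ) pt :=
    contDiffAt_PhiMap γ pt hγ1 (by rw [hptdef]; simpa [hUa3] using ne_of_gt hρa)
      (by rw [hptdef]; simpa [hU23] using hρ)
  set D := fderiv ℝ (PhiMap γ) pt with hDdef
  have hD : HasFDerivAt (PhiMap γ) D pt := (hΦ.differentiableAt one_ne_zero).hasFDerivAt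
  -- numeric prerequisites
  have hγ0 : 0 < γ := by linarith
  have hc2pos : 0 < c₂ := by rw [hc₂]; exact Real.sqrt_pos.mpr (by positivity)
  have hu2 : 0 < u₂ := lt_trans hc2pos hsup
  have hc2sq : c₂ ^ 2 = γ * p₂ / ρ₂ := by rw [hc₂]; exact Real.sq_sqrt (by positivity)
  have hdiff : 0 < u₂ ^ 2 - c₂ ^ 2 := by nlinarith
  have hsqrtpos : 0 < Real.sqrt (u₂ ^ 2 - c₂ ^ 2) := Real.sqrt_pos.mpr hdiff
  have hσ2' : σ₄₀ * Real.sqrt (u₂ ^ 2 - c₂ ^ 2) < c₂ := (lt_div_iff₀ hsqrtpos).mp hσ2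
  have hsq : σ₄₀ ^ 2 * (u₂ ^ 2 - c₂ ^ 2) < c₂ ^ 2 := by
    have h2 : (σ₄₀ * Real.sqrt (u₂ ^ 2 - c₂ ^ 2)) ^ 2 < c₂ ^ 2 := by
      have hnn : (0:ℝ) ≤ σ₄₀ * Real.sqrt (u₂ ^ 2 - c₂ ^ 2) := by positivity
      have h := mul_self_lt_mul_self hnn hσ2'
      nlinarith [h]
    calc σ₄₀ ^ 2 * (u₂ ^ 2 - c₂ ^ 2) = (σ₄₀ * Real.sqrt (u₂ ^ 2 - c₂ ^ 2)) ^ 2 := by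
          rw [mul_pow, Real.sq_sqrt hdiff.le]
      _ < c₂ ^ 2 := h2
  have hgap : σ₄₀ ^ 2 * (u₂ ^ 2 * ρ₂ - γ * p₂) < γ * p₂ := by
    have h5 := mul_lt_mul_of_pos_right hsq hρ2
    have h6 : c₂ ^ 2 * ρ₂ = γ * p₂ := by rw [hc2sq]; field_simp
    nlinarith [h5, h6]
  -- the first two components of D
  have hfst : ∀ w, (D w).1 = w.1 := by
    have e0 := (ContinuousLinearMap.fst ℝ ℝ ((Fin 4 → ℝ) × (Fin 4 → ℝ))).hasFDerivAt.comp pt hD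
    have e1 : HasFDerivAt (fun x : ℝ × (Fin 4 → ℝ) × (Fin 4 → ℝ) => x.1)
        ((ContinuousLinearMap.fst ℝ ℝ ((Fin 4 → ℝ) × (Fin 4 → ℝ))).comp D) pt := e0
    have e2 : HasFDerivAt (fun x : ℝ × (Fin 4 → ℝ) × (Fin 4 → ℝ) => x.1)
        (ContinuousLinearMap.fst ℝ ℝ ((Fin 4 → ℝ) × (Fin 4 → ℝ))) pt :=
      (ContinuousLinearMap.fst ℝ ℝ ((Fin 4 → ℝ) × (Fin 4 → ℝ))).hasFDerivAt
    have h := e1.unique e2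
    intro w
    exact DFunLike.congr_fun h w
  have hsnd1 : ∀ w, (D w).2.1 = w.2.1 := by
    have e0 := ((ContinuousLinearMap.fst ℝ (Fin 4 → ℝ) (Fin 4 → ℝ)).comp
          (ContinuousLinearMap.snd ℝ ℝ ((Fin 4 → ℝ) × (Fin 4 → ℝ)))).hasFDerivAt.comp pt hD
    have e1 : HasFDerivAt (fun x : ℝ × (Fin 4 → ℝ) × (Fin 4 → ℝ) => x.2.1)
        (((ContinuousLinearMap.fst ℝ (Fin 4 → ℝ) (Fin 4 → ℝ)).comp
          (ContinuousLinearMap.snd ℝ ℝ ((Fin 4 → ℝ) × (Fin 4 → ℝ)))).comp D) pt := e0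
    have e2 : HasFDerivAt (fun x : ℝ × (Fin 4 → ℝ) × (Fin 4 → ℝ) => x.2.1)
        ((ContinuousLinearMap.fst ℝ (Fin 4 → ℝ) (Fin 4 → ℝ)).comp
          (ContinuousLinearMap.snd ℝ ℝ ((Fin 4 → ℝ) × (Fin 4 → ℝ)))) pt :=
      ((ContinuousLinearMap.fst ℝ (Fin 4 → ℝ) (Fin 4 → ℝ)).comp
          (ContinuousLinearMap.snd ℝ ℝ ((Fin 4 → ℝ) × (Fin 4 → ℝ)))).hasFDerivAt
    have h := e1.unique e2
    intro w
    exact DFunLike.congr_fun h w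
  -- kernel of D is trivial
  have hker : ∀ w, D w = 0 → w = 0 := by
    rintro ⟨s, a, b⟩ hw
    have hs : s = 0 := by
      have h := hfst (s, a, b); rw [hw] at h; simpa using h.symm
    have ha : a = 0 := by
      have h := hsnd1 (s, a, b); rw [hw] at h; simpa using h.symm
    set C3 : (ℝ × (Fin 4 → ℝ) × (Fin 4 → ℝ)) →L[ℝ] (Fin 4 → ℝ) :=
      (ContinuousLinearMap.snd ℝ (Fin 4 → ℝ) (Fin 4 → ℝ)).comp
        (ContinuousLinearMap.snd ℝ ℝ ((Fin 4 → ℝ) × (Fin 4 → ℝ))) with hC3def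
    have e30 := C3.hasFDerivAt.comp pt hD
    have e3 : HasFDerivAt (fun x : ℝ × (Fin 4 → ℝ) × (Fin 4 → ℝ) => (PhiMap γ x).2.2)
        (C3.comp D) pt := e30
    set w₀ : ℝ × (Fin 4 → ℝ) × (Fin 4 → ℝ) := (0, 0, b) with hw₀def
    have hline : HasDerivAt (fun t : ℝ => pt + t • w₀) w₀ 0 := by
      simpa using ((hasDerivAt_id (0 : ℝ)).smul_const w₀).const_add pt
    have hpt0 : pt + (0 : ℝ) • w₀ = pt := by simp
    have e3' : HasFDerivAt (fun x : ℝ × (Fin 4 → ℝ) × (Fin 4 → ℝ) => (PhiMap γ x).2.2)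
        (C3.comp D) (pt + (0 : ℝ) • w₀) := by rw [hpt0]; exact e3
    have hcomp : HasDerivAt (fun t : ℝ => (PhiMap γ (pt + t • w₀)).2.2) ((C3.comp D) w₀) 0 :=
      e3'.comp_hasDerivAt (f := fun t : ℝ => pt + t • w₀) 0 hline
    have hEcurve : HasDerivAt (fun t : ℝ => (PhiMap γ (pt + t • w₀)).2.2)
        (DVec γ σ₄₀ U₂ b) 0 := by
      have hfun : (fun t : ℝ => (PhiMap γ (pt + t • w₀)).2.2)
          = fun t : ℝ => σ₄₀ • (Wf γ Ua - Wf γ (U₂ + t • b)) - (Hf γ Ua - Hf γ (U₂ + t • b)) := by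
        funext t
        simp [PhiMap, hptdef, hw₀def, Prod.mk_add_mk, Prod.smul_mk, smul_zero, add_zero,
          mul_zero]
      rw [hfun]
      refine hasDerivAt_pi.mpr (fun i => ?_)
      simpa [Pi.smul_apply, Pi.sub_apply, smul_eq_mul] using
        shockCurve_hasDerivAt γ σ₄₀ Ua U₂ b hγ1 (by rw [hU23]; exact hρ) i
    have hDb : (C3.comp D) w₀ = DVec γ σ₄₀ U₂ b := hcomp.unique hEcurve
    have hw0 : ((s, a, b) : ℝ × (Fin 4 → ℝ) × (Fin 4 → ℝ)) = w₀ := by rw [hs, ha]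
    have hDV0 : DVec γ σ₄₀ U₂ b = 0 := by
      rw [← hDb]
      show C3 (D w₀) = 0
      rw [← hw0, hw]
      simp
    have hb : b = 0 := by
      apply shock_inj γ u₂ p₂ ρ₂ σ₄₀ b hγ hρ2 hp2 hu2 hσ1 hgap
      rw [← hU₂]; exact hDV0
    rw [hs, ha, hb]; rfl
  have hinj : Function.Injective D := by
    intro x y hxy
    have := hker (x - y) (by rw [map_sub, hxy, sub_self])
    exact sub_eq_zero.mp this
  have hinj' : Function.Injective D.toLinearMap := hinj
  have hbij : Function.Bijective D.toLinearMap :=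
    ⟨hinj', LinearMap.injective_iff_surjective.mp hinj'⟩
  let eD : (ℝ × (Fin 4 → ℝ) × (Fin 4 → ℝ)) ≃L[ℝ] (ℝ × (Fin 4 → ℝ) × (Fin 4 → ℝ)) :=
    (LinearEquiv.ofBijective D.toLinearMap hbij).toContinuousLinearEquiv
  have heD : (eD : (ℝ × (Fin 4 → ℝ) × (Fin 4 → ℝ)) →L[ℝ] (ℝ × (Fin 4 → ℝ) × (Fin 4 → ℝ))) = D :=
    ContinuousLinearMap.ext fun w => rfl
  have hD' : HasFDerivAt (PhiMap γ)
      (eD : (ℝ × (Fin 4 → ℝ) × (Fin 4 → ℝ)) →L[ℝ] (ℝ × (Fin 4 → ℝ) × (Fin 4 → ℝ))) pt := by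
    rw [heD]; exact hD
  -- inverse function theorem
  set e := hΦ.toOpenPartialHomeomorph (PhiMap γ) hD' one_ne_zero with hedef
  have hpts : pt ∈ e.source := hΦ.mem_toOpenPartialHomeomorph_source hD' one_ne_zero
  have hptt : PhiMap γ pt ∈ e.target := hΦ.image_mem_toOpenPartialHomeomorph_target hD' one_ne_zero
  set Ψ := hΦ.localInverse hD' one_ne_zero with hΨdef
  have hΨpt : Ψ (PhiMap γ pt) = pt := hΦ.localInverse_apply_image hD' one_ne_zero
  have hΨC : ContDiffAt ℝ 1 Ψ (PhiMap γ pt) := hΦ.to_localInverse hD' one_ne_zero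
  have hΦpt : PhiMap γ pt = (σ₄₀, Ua, (0 : Fin 4 → ℝ)) := by
    show (σ₄₀, Ua, σ₄₀ • (Wf γ Ua - Wf γ U₂) - (Hf γ Ua - Hf γ U₂)) = _
    rw [hRH, sub_self]
  obtain ⟨V₀, hV₀mem, hV₀cd⟩ := hΨC.contDiffOn le_rfl (by norm_num)
  obtain ⟨V₁, hV₁sub, hV₁open, hV₁mem⟩ := mem_nhds_iff.mp hV₀mem
  have hVopen : IsOpen (V₁ ∩ e.target) := hV₁open.inter e.open_target
  have hVmem : PhiMap γ pt ∈ V₁ ∩ e.target := ⟨hV₁mem, hptt⟩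
  have hVcd : ContDiffOn ℝ 1 Ψ (V₁ ∩ e.target) :=
    hV₀cd.mono (Set.Subset.trans Set.inter_subset_left hV₁sub)
  -- split the source into a product of opens
  obtain ⟨A₁, B, hA₁o, hBo, hA₁m, hBm, hABs⟩ :=
    isOpen_prod_iff.mp e.open_source σ₄₀ (Ua, U₂) hpts
  obtain ⟨A₂, N₃, hA₂o, hN₃o, hA₂m, hN₃m, hABs2⟩ := isOpen_prod_iff.mp hBo Ua U₂ hBm
  -- good subset of the target
  set Q : Set (ℝ × (Fin 4 → ℝ) × (Fin 4 → ℝ)) :=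
    (V₁ ∩ e.target) ∩ (Ψ ⁻¹' (Set.univ ×ˢ Set.univ ×ˢ N₃)) with hQdef
  have hQopen : IsOpen Q :=
    hVcd.continuousOn.isOpen_inter_preimage hVopen (isOpen_univ.prod (isOpen_univ.prod hN₃o))
  have hQmem : PhiMap γ pt ∈ Q :=
    ⟨hVmem, by rw [Set.mem_preimage, hΨpt]; exact ⟨Set.mem_univ _, Set.mem_univ _, hN₃m⟩⟩
  set j : ℝ × (Fin 4 → ℝ) → ℝ × (Fin 4 → ℝ) × (Fin 4 → ℝ) :=
    fun q => (q.1, q.2, (0 : Fin 4 → ℝ)) with hjdef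
  have hjc : Continuous j := continuous_fst.prodMk (continuous_snd.prodMk continuous_const)
  have hKopen : IsOpen (j ⁻¹' Q ∩ A₁ ×ˢ A₂) := (hQopen.preimage hjc).inter (hA₁o.prod hA₂o)
  have hKm : (σ₄₀, Ua) ∈ j ⁻¹' Q ∩ A₁ ×ˢ A₂ := by
    refine ⟨?_, hA₁m, hA₂m⟩
    show j (σ₄₀, Ua) ∈ Q
    rw [show j (σ₄₀, Ua) = PhiMap γ pt from by rw [hΦpt]]
    exact hQmem
  obtain ⟨N₁, N₂, hN₁o, hN₂o, hN₁m, hN₂m, hNsub⟩ := isOpen_prod_iff.mp hKopen σ₄₀ Ua hKm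
  have hNK : ∀ σ ∈ N₁, ∀ U₀ ∈ N₂, ((σ, U₀, (0 : Fin 4 → ℝ)) :
      ℝ × (Fin 4 → ℝ) × (Fin 4 → ℝ)) ∈ Q := by
    intro σ hσ U₀ hU₀
    exact (hNsub (Set.mk_mem_prod hσ hU₀)).1
  have hNA : ∀ σ ∈ N₁, ∀ U₀ ∈ N₂, σ ∈ A₁ ∧ U₀ ∈ A₂ := by
    intro σ hσ U₀ hU₀
    exact ⟨((hNsub (Set.mk_mem_prod hσ hU₀)).2).1, ((hNsub (Set.mk_mem_prod hσ hU₀)).2).2⟩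
  have hNsrc : ∀ σ ∈ N₁, ∀ U₀ ∈ N₂, ∀ U ∈ N₃,
      ((σ, U₀, U) : ℝ × (Fin 4 → ℝ) × (Fin 4 → ℝ)) ∈ e.source := by
    intro σ hσ U₀ hU₀ U hU
    obtain ⟨h1, h2⟩ := hNA σ hσ U₀ hU₀
    exact hABs ⟨h1, hABs2 ⟨h2, hU⟩⟩
  refine ⟨N₁, N₂, N₃, hN₁o, hN₂o, hN₃o, hN₁m, hN₂m, hN₃m,
    fun σ U₀ => (Ψ (σ, U₀, (0 : Fin 4 → ℝ))).2.2, ?_, ?_, ?_, ?_⟩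
  · -- C¹ smoothness
    have hmap : Set.MapsTo j (N₁ ×ˢ N₂) (V₁ ∩ e.target) := by
      intro q hq
      exact (hNK q.1 hq.1 q.2 hq.2).1
    have hjcd : ContDiff ℝ 1 j := contDiff_fst.prodMk (contDiff_snd.prodMk contDiff_const)
    have h := hVcd.comp hjcd.contDiffOn hmap
    exact (contDiff_snd.comp contDiff_snd).comp_contDiffOn h
  · -- value at base point
    show (Ψ (σ₄₀, Ua, (0 : Fin 4 → ℝ))).2.2 = U₂
    rw [← hΦpt, hΨpt]
  · -- maps into N₃
    intro σ hσ U₀ hU₀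
    exact ((hNK σ hσ U₀ hU₀).2).2.2
  · -- the characterization
    intro σ hσ U₀ hU₀ U hU
    constructor
    · intro hRHeq
      have hx : ((σ, U₀, U) : ℝ × (Fin 4 → ℝ) × (Fin 4 → ℝ)) ∈ e.source :=
        hNsrc σ hσ U₀ hU₀ U hU
      have hΦx : PhiMap γ ((σ, U₀, U) : ℝ × (Fin 4 → ℝ) × (Fin 4 → ℝ))
          = (σ, U₀, (0 : Fin 4 → ℝ)) := by
        show (σ, U₀, σ • (Wf γ U₀ - Wf γ U) - (Hf γ U₀ - Hf γ U)) = _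
        rw [hRHeq, sub_self]
      have h2 : Ψ ((σ, U₀, (0 : Fin 4 → ℝ)) : ℝ × (Fin 4 → ℝ) × (Fin 4 → ℝ)) = (σ, U₀, U) := by
        calc Ψ ((σ, U₀, (0 : Fin 4 → ℝ)) : ℝ × (Fin 4 → ℝ) × (Fin 4 → ℝ))
            = Ψ (PhiMap γ (σ, U₀, U)) := by rw [hΦx]
          _ = (σ, U₀, U) := e.left_inv hx
      show U = (Ψ ((σ, U₀, (0 : Fin 4 → ℝ)) : ℝ × (Fin 4 → ℝ) × (Fin 4 → ℝ))).2.2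
      rw [h2]
    · intro hUeq
      replace hUeq : U = (Ψ ((σ, U₀, (0 : Fin 4 → ℝ)) : ℝ × (Fin 4 → ℝ) × (Fin 4 → ℝ))).2.2 := hUeq
      have hQm := hNK σ hσ U₀ hU₀
      have htgt : ((σ, U₀, (0 : Fin 4 → ℝ)) : ℝ × (Fin 4 → ℝ) × (Fin 4 → ℝ)) ∈ e.target :=
        hQm.1.2
      have hri : PhiMap γ (Ψ ((σ, U₀, (0 : Fin 4 → ℝ)) : ℝ × (Fin 4 → ℝ) × (Fin 4 → ℝ)))
          = (σ, U₀, (0 : Fin 4 → ℝ)) := e.right_inv htgt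
      have hy1 : (Ψ ((σ, U₀, (0 : Fin 4 → ℝ)) : ℝ × (Fin 4 → ℝ) × (Fin 4 → ℝ))).1 = σ :=
        congrArg Prod.fst hri
      have hy2 : (Ψ ((σ, U₀, (0 : Fin 4 → ℝ)) : ℝ × (Fin 4 → ℝ) × (Fin 4 → ℝ))).2.1 = U₀ :=
        congrArg (fun z => z.2.1) hri
      have hy3 := congrArg (fun z : ℝ × (Fin 4 → ℝ) × (Fin 4 → ℝ) => z.2.2) hri
      simp only at hy3
      set y := Ψ ((σ, U₀, (0 : Fin 4 → ℝ)) : ℝ × (Fin 4 → ℝ) × (Fin 4 → ℝ)) with hydef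
      have hy3' : y.1 • (Wf γ y.2.1 - Wf γ y.2.2) - (Hf γ y.2.1 - Hf γ y.2.2) = 0 := hy3
      rw [hy1, hy2, ← hUeq] at hy3'
      exact sub_eq_zero.mp hy3'
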